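/- (Oscillators with damping: exponential instability of the time-reversed flow.) Let j ≥ 3, M := E₁₁ + Tri_j(1,0,−1) (the j×j matrix with 1 in the (1,1) entry, 1 on the subdiagonal, −1 on the superdiagonal, 0 elsewhere). Define b_i := log(i+1) for i = 2, …, j+1, a₁ := Σ_{i=2}^{j} b_i, a₀ := a₁ + a₁²/(2 log 2) + b₂ + b_j − b_{j+1}/2 − b_{j−1}/2, r_j := (b_j − b_{j+1}/2 − b_{j−1}/2) / (a₀ + 2 Σ_{i=2}^{j} b_i), and c_j := (a₀/2 − Σ_{i=2}^{j} b_i) / (a₀/2 + Σ_{i=2}^{j} b_i). Then for every x ∈ ℝʲ and every t ≥ 0: ‖e^{tM} x‖² ≥ c_j e^{r_j t} ‖x‖²; consequently, with A̲ := Tri_j(1,0,−1) − E₁₁, for every t ≥ 0: ∫₀^t ‖e^{−v A̲ᵀ} x‖² dv ≥ ‖x‖² (c_j / r_j)(e^{r_j t} − 1). -/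

import Mathlib

open Matrix

noncomputable section

/-- Tri_j(1,0,−1): the j×j tridiagonal matrix with 1 on the subdiagonal and −1 on the
superdiagonal. -/
def triJ (j : ℕ) : Matrix (Fin j) (Fin j) ℝ :=
  Matrix.of fun i m =>
    if (i : ℕ) = (m : ℕ) + 1 then 1 else if (m : ℕ) = (i : ℕ) + 1 then -1 else 0

/-- E₁₁: the j×j matrix with 1 in the (1,1) entry and 0 elsewhere. -/
def e11 (j : ℕ) : Matrix (Fin j) (Fin j) ℝ :=
  Matrix.of fun i m => if (i : ℕ) = 0 ∧ (m : ℕ) = 0 then 1 else 0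

/-- b_i = log(i+1) -/
def bI (i : ℕ) : ℝ := Real.log (i + 1)

/-- Σ_{i=2}^{j} b_i -/
def sumB (j : ℕ) : ℝ := ∑ i ∈ Finset.Icc 2 j, bI i

/-- a₁ = Σ_{i=2}^{j} b_i -/
def a1 (j : ℕ) : ℝ := sumB j

/-- a₀ = a₁ + a₁²/(2 log 2) + b₂ + b_j − b_{j+1}/2 − b_{j−1}/2 -/
def a0 (j : ℕ) : ℝ :=
  a1 j + (a1 j) ^ 2 / (2 * Real.log 2) + bI 2 + bI j - bI (j + 1) / 2 - bI (j - 1) / 2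

/-- r_j = (b_j − b_{j+1}/2 − b_{j−1}/2)/(a₀ + 2Σ_{i=2}^{j} b_i) -/
def rJ (j : ℕ) : ℝ := (bI j - bI (j + 1) / 2 - bI (j - 1) / 2) / (a0 j + 2 * sumB j)

/-- c_j = (a₀/2 − Σ_{i=2}^{j} b_i)/(a₀/2 + Σ_{i=2}^{j} b_i) -/
def cJ (j : ℕ) : ℝ := (a0 j / 2 - sumB j) / (a0 j / 2 + sumB j)

open Finset NormedSpace

namespace S19

def rho (j : ℕ) : ℝ := bI j - bI (j + 1) / 2 - bI (j - 1) / 2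

def g (j k : ℕ) : ℝ := ∑ m ∈ Finset.Icc (k+1) j, bI m

lemma bI_nonneg (i : ℕ) : 0 ≤ bI i := Real.log_nonneg (by push_cast; linarith [Nat.cast_nonneg (α := ℝ) i])

lemma bI_one : bI 1 = Real.log 2 := by norm_num [bI]

lemma bI_sub_one {m : ℕ} (hm : 1 ≤ m) : bI (m - 1) = Real.log m := by
  unfold bI
  congr 1
  rw [Nat.cast_sub hm]
  push_cast
  ring

lemma g_succ (j k : ℕ) (h : k + 1 ≤ j) : g j k = bI (k+1) + g j (k+1) := by
  unfold g
  rw [← Finset.add_sum_erase (Finset.Icc (k+1) j) bI (a := k+1)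
    (by simp only [Finset.mem_Icc]; omega)]
  congr 1
  rw [Finset.Icc_erase_left, ← Finset.Icc_add_one_left_eq_Ioc]

lemma g_one (j : ℕ) : g j 1 = sumB j := rfl

lemma g_top (j : ℕ) : g j j = 0 := by
  unfold g
  rw [Finset.Icc_eq_empty (by omega)]
  simp

lemma g_nonneg (j k : ℕ) : 0 ≤ g j k := Finset.sum_nonneg fun i _ => bI_nonneg i

lemma g_le_sumB (j k : ℕ) (hk : 1 ≤ k) : g j k ≤ sumB j := by
  apply Finset.sum_le_sum_of_subset_of_nonneg
  · apply Finset.Icc_subset_Icc_left; omega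
  · intro i _ _; exact bI_nonneg i

lemma log2_pos : (0:ℝ) < Real.log 2 := Real.log_pos (by norm_num)

lemma real_key {a c : ℝ} (ha2 : 2 ≤ a) (hac : a ≤ c) :
    Real.log (c+1) - Real.log (c+2)/2 - Real.log c/2
      ≤ Real.log (a+1) - Real.log (a+2)/2 - Real.log a/2 := by
  have h1 : (0:ℝ) < a := by linarith
  have h2 : (0:ℝ) < c := by linarith
  have key : Real.log ((c+1)^2 * (a * (a+2))) ≤ Real.log ((a+1)^2 * (c * (c+2))) := by
    apply Real.log_le_log (by positivity)
    nlinarith [mul_nonneg (sub_nonneg.2 hac) (by linarith : (0:ℝ) ≤ c + a + 2)]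
  rw [Real.log_mul (by positivity) (by positivity), Real.log_mul (by positivity) (by positivity),
    Real.log_mul (by positivity) (by positivity), Real.log_mul (by positivity) (by positivity),
    Real.log_pow, Real.log_pow] at key
  push_cast at key
  linarith

/-- key log concavity-defect monotonicity -/
lemma key_log {m j : ℕ} (hm : 2 ≤ m) (hmj : m ≤ j) :
    bI j - bI (j + 1) / 2 - bI (j - 1) / 2 ≤ bI m - bI (m + 1) / 2 - bI (m - 1) / 2 := by
  have hj2 : 2 ≤ j := le_trans hm hmj
  rw [bI_sub_one (by omega), bI_sub_one (by omega)]
  unfold bI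
  have e1 : ((j:ℕ):ℝ) + 1 + 1 = (j:ℝ) + 2 := by push_cast; ring
  have e2 : ((m:ℕ):ℝ) + 1 + 1 = (m:ℝ) + 2 := by push_cast; ring
  push_cast
  rw [e1, e2]
  exact real_key (by exact_mod_cast hm) (by exact_mod_cast hmj)

lemma rho_pos {j : ℕ} (hj : 3 ≤ j) : 0 < rho j := by
  unfold rho
  rw [bI_sub_one (by omega)]
  unfold bI
  have h1 : (0:ℝ) < j := by exact_mod_cast (by omega : 0 < j)
  have key : Real.log ((j:ℝ) * ((j:ℝ) + 2)) < Real.log (((j:ℝ)+1)^2) := by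
    apply Real.log_lt_log (by positivity)
    nlinarith
  rw [Real.log_mul (by positivity) (by positivity), Real.log_pow] at key
  have e1 : ((j:ℕ):ℝ) + 1 + 1 = (j:ℝ) + 2 := by push_cast; ring
  push_cast at key ⊢
  rw [e1]
  push_cast at key
  linarith

lemma sumB_ge (j : ℕ) (hj : 3 ≤ j) : 2 * Real.log 2 ≤ sumB j := by
  have h1 : bI 2 + bI 3 ≤ sumB j := by
    have : ∑ i ∈ Finset.Icc 2 3, bI i ≤ sumB j := by
      apply Finset.sum_le_sum_of_subset_of_nonneg
      · apply Finset.Icc_subset_Icc_right; omega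
      · intro i _ _; exact bI_nonneg i
    simpa [Finset.sum_Icc_succ_top, show (2:ℕ) ≤ 3 by norm_num] using this
  have h2 : bI 3 = 2 * Real.log 2 := by
    unfold bI
    rw [show ((3:ℕ):ℝ) + 1 = 2^2 by norm_num, Real.log_pow]
    push_cast; ring
  have := bI_nonneg 2
  linarith

lemma sumB_pos {j : ℕ} (hj : 3 ≤ j) : 0 < sumB j :=
  lt_of_lt_of_le (by positivity) (sumB_ge j hj)

lemma a0_eq {j : ℕ} (hj : 3 ≤ j) :
    a0 j = sumB j + (sumB j)^2 / (2 * Real.log 2) + bI 2 + rho j := by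
  unfold a0 a1 rho; ring

lemma a0_pos {j : ℕ} (hj : 3 ≤ j) : 0 < a0 j := by
  rw [a0_eq hj]
  have := sumB_pos hj
  have := rho_pos hj
  have := bI_nonneg 2
  have := log2_pos
  positivity

lemma a0_half_sub_sumB_pos {j : ℕ} (hj : 3 ≤ j) : 0 < a0 j / 2 - sumB j := by
  rw [a0_eq hj]
  have hS := sumB_ge j hj
  have hS0 := sumB_pos hj
  have hρ := rho_pos hj
  have hb2 := bI_nonneg 2
  have hL := log2_pos
  have : sumB j ≤ (sumB j)^2/(2*Real.log 2) := by
    rw [le_div_iff₀ (by positivity)]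
    nlinarith
  nlinarith

lemma rJ_pos {j : ℕ} (hj : 3 ≤ j) : 0 < rJ j := by
  unfold rJ
  have h1 := rho_pos hj
  have h2 := a0_pos hj
  have h3 := sumB_pos hj
  unfold rho at h1
  positivity

lemma rJ_eq {j : ℕ} : rJ j = rho j / (a0 j + 2 * sumB j) := rfl

/-- CORE1 : the skew part does not contribute -/
lemma core1 (n : ℕ) (u du : ℕ → ℝ) (hu : u (n+3) = 0)
    (hdu : ∀ k < n+3, du k = (if k = 0 then u 0 else u (k-1)) - u (k+1)) :
    ∑ k ∈ range (n+3), u k * du k = u 0 ^ 2 := by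
  rw [Finset.sum_range_succ' (fun k => u k * du k) (n+2)]
  have h0 : du 0 = u 0 - u 1 := by rw [hdu 0 (by omega)]; simp
  have hterm : ∀ i ∈ range (n+2), u (i+1) * du (i+1) = u i * u (i+1) - u (i+1) * u (i+2) := by
    intro i hi
    rw [Finset.mem_range] at hi
    rw [hdu (i+1) (by omega)]
    simp only [Nat.add_sub_cancel, if_neg (Nat.succ_ne_zero i)]
    ring
  rw [Finset.sum_congr rfl hterm, Finset.sum_sub_distrib]
  have h2 : ∑ i ∈ range (n+2), u (i+1) * u (i+2)
      = ∑ i ∈ range (n+2), u i * u (i+1) - u 0 * u 1 := by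
    have := Finset.sum_range_succ' (fun i => u i * u (i+1)) (n+2)
    have h3 := Finset.sum_range_succ (fun i => u i * u (i+1)) (n+2)
    -- ∑_{i<n+3} = ∑_{i<n+2} f(i+1) + f 0   and   ∑_{i<n+3} = ∑_{i<n+2} f + f(n+2)
    have h4 : u (n+2) * u (n+3) = 0 := by rw [hu]; ring
    linarith [this, h3]
  rw [h2, h0]
  ring

/-- CORE2 : explicit form of the cross-term derivative -/
lemma core2 (n : ℕ) (u du : ℕ → ℝ) (hu : u (n+3) = 0)
    (hdu : ∀ k < n+3, du k = (if k = 0 then u 0 else u (k-1)) - u (k+1)) :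
    ∑ i ∈ range (n+2), g (n+3) (i+1) * (du i * u (i+1) + u i * du (i+1))
      = sumB (n+3) * u 0 ^ 2 + sumB (n+3) * (u 0 * u 1)
        - ∑ i ∈ range (n+2), bI (i+2) * u (i+1) ^ 2
        - ∑ i ∈ range (n+1), bI (i+2) * (u i * u (i+2)) := by
  have hG : ∀ i, i + 2 ≤ n+3 → bI (i+2) = g (n+3) (i+1) - g (n+3) (i+2) := by
    intro i hi
    have := g_succ (n+3) (i+1) (by omega)
    linarith [this]
  -- basis sums
  set SA := ∑ i ∈ range (n+1), g (n+3) (i+2) * (u i * u (i+2)) with hSA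
  set SB := ∑ i ∈ range (n+1), g (n+3) (i+2) * u (i+2) ^ 2 with hSB
  set SC := ∑ i ∈ range (n+1), g (n+3) (i+2) * u (i+1) ^ 2 with hSC
  set SE := ∑ i ∈ range (n+1), g (n+3) (i+1) * (u i * u (i+2)) with hSE
  -- LHS decomposition
  have hL : ∑ i ∈ range (n+2), g (n+3) (i+1) * (du i * u (i+1) + u i * du (i+1))
      = SA - SB + SC - (SE - g (n+3) 1 * (u 0 * u 2))
        + g (n+3) 1 * ((u 0 - u 1) * u 1 + u 0 * (u 0 - u 2)) := by
    rw [Finset.sum_range_succ'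
      (fun i => g (n+3) (i+1) * (du i * u (i+1) + u i * du (i+1))) (n+1)]
    have h0 : du 0 = u 0 - u 1 := by rw [hdu 0 (by omega)]; simp
    have h1 : du 1 = u 0 - u 2 := by rw [hdu 1 (by omega)]; simp
    have hterm : ∀ i ∈ range (n+1),
        g (n+3) (i+1+1) * (du (i+1) * u (i+1+1) + u (i+1) * du (i+1+1))
        = g (n+3) (i+2) * (u i * u (i+2)) - g (n+3) (i+2) * u (i+2)^2
          + g (n+3) (i+2) * u (i+1)^2 - g (n+3) (i+2) * (u (i+1) * u (i+3)) := by
      intro i hi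
      rw [Finset.mem_range] at hi
      rw [hdu (i+1) (by omega), hdu (i+2) (by omega)]
      simp only [Nat.add_sub_cancel, show i+2-1 = i+1 from rfl,
        if_neg (Nat.succ_ne_zero i), if_neg (Nat.succ_ne_zero (i+1))]
      ring
    rw [Finset.sum_congr rfl hterm]
    have hsplit : ∑ i ∈ range (n+1),
        (g (n+3) (i+2) * (u i * u (i+2)) - g (n+3) (i+2) * u (i+2)^2
          + g (n+3) (i+2) * u (i+1)^2 - g (n+3) (i+2) * (u (i+1) * u (i+3)))
        = SA - SB + SC - ∑ i ∈ range (n+1), g (n+3) (i+2) * (u (i+1) * u (i+3)) := by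
      rw [hSA, hSB, hSC]
      rw [← Finset.sum_sub_distrib, ← Finset.sum_add_distrib, ← Finset.sum_sub_distrib]
    rw [hsplit, h0, h1]
    have hSD : ∑ i ∈ range (n+1), g (n+3) (i+2) * (u (i+1) * u (i+3))
        = SE - g (n+3) 1 * (u 0 * u 2) := by
      have p1 : ∑ i ∈ range (n+2), g (n+3) (i+1) * (u i * u (i+2))
          = (∑ i ∈ range (n+1), g (n+3) (i+2) * (u (i+1) * u (i+3))) + g (n+3) 1 * (u 0 * u 2) :=
        Finset.sum_range_succ' (fun i => g (n+3) (i+1) * (u i * u (i+2))) (n+1)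
      have p2 : ∑ i ∈ range (n+2), g (n+3) (i+1) * (u i * u (i+2))
          = (∑ i ∈ range (n+1), g (n+3) (i+1) * (u i * u (i+2)))
            + g (n+3) (n+2) * (u (n+1) * u (n+3)) :=
        Finset.sum_range_succ (fun i => g (n+3) (i+1) * (u i * u (i+2))) (n+1)
      have p3 : g (n+3) (n+2) * (u (n+1) * u (n+3)) = 0 := by rw [hu]; ring
      rw [hSE]
      rw [p3] at p2
      linarith [p1, p2]
    rw [hSD]
  rw [hL]
  -- RHS sums in terms of basis
  have hA : ∑ i ∈ range (n+2), bI (i+2) * u (i+1) ^ 2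
      = SB + g (n+3) 1 * u 1 ^ 2 - SC := by
    have hterm : ∀ i ∈ range (n+2), bI (i+2) * u (i+1)^2
        = g (n+3) (i+1) * u (i+1)^2 - g (n+3) (i+2) * u (i+1)^2 := by
      intro i hi
      rw [Finset.mem_range] at hi
      rw [hG i (by omega)]
      ring
    rw [Finset.sum_congr rfl hterm, Finset.sum_sub_distrib]
    have q1 : ∑ i ∈ range (n+2), g (n+3) (i+1) * u (i+1)^2
        = (∑ i ∈ range (n+1), g (n+3) (i+2) * u (i+2)^2) + g (n+3) 1 * u 1^2 :=
      Finset.sum_range_succ' (fun i => g (n+3) (i+1) * u (i+1)^2) (n+1)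
    have q2 : ∑ i ∈ range (n+2), g (n+3) (i+2) * u (i+1)^2
        = (∑ i ∈ range (n+1), g (n+3) (i+2) * u (i+1)^2) + g (n+3) (n+3) * u (n+2)^2 :=
      Finset.sum_range_succ (fun i => g (n+3) (i+2) * u (i+1)^2) (n+1)
    rw [g_top] at q2
    rw [q1, q2, hSB, hSC]
    ring
  have hB : ∑ i ∈ range (n+1), bI (i+2) * (u i * u (i+2)) = SE - SA := by
    have hterm : ∀ i ∈ range (n+1), bI (i+2) * (u i * u (i+2))
        = g (n+3) (i+1) * (u i * u (i+2)) - g (n+3) (i+2) * (u i * u (i+2)) := by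
      intro i hi
      rw [Finset.mem_range] at hi
      rw [hG i (by omega)]
      ring
    rw [Finset.sum_congr rfl hterm, Finset.sum_sub_distrib, hSE, hSA]
  rw [hA, hB, ← g_one (n+3)]
  ring

/-- CORE3 : the quadratic form inequality -/
lemma core3 (n : ℕ) (u : ℕ → ℝ) :
    rho (n+3) * (u 0 ^ 2 + ∑ i ∈ range (n+2), u (i+1) ^ 2)
      ≤ (a0 (n+3) - sumB (n+3)) * u 0 ^ 2 - sumB (n+3) * (u 0 * u 1)
        + ∑ i ∈ range (n+2), bI (i+2) * u (i+1) ^ 2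
        + ∑ i ∈ range (n+1), bI (i+2) * (u i * u (i+2)) := by
  set L := Real.log 2 with hLdef
  have hL : (0:ℝ) < L := log2_pos
  set S := sumB (n+3) with hSdef
  have hS : (0:ℝ) < S := sumB_pos (by omega)
  -- step 1 : the (0,1) cross term
  have h1 : - (S^2/(2*L)) * u 0^2 - (L/2) * u 1^2 ≤ - S * (u 0 * u 1) := by
    have key : S^2/(2*L) * u 0^2 + L/2 * u 1^2 - S * (u 0 * u 1)
        = (S * u 0 - L * u 1)^2 / (2*L) := by
      field_simp
      ring
    nlinarith [sq_nonneg (S * u 0 - L * u 1), div_nonneg (sq_nonneg (S * u 0 - L * u 1)) (by linarith : (0:ℝ) ≤ 2*L)]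
  -- step 2 : other cross terms
  have h2 : (∑ i ∈ range (n+1), (-(bI (i+2)/2) * u i ^2 - (bI (i+2)/2) * u (i+2)^2))
      ≤ ∑ i ∈ range (n+1), bI (i+2) * (u i * u (i+2)) := by
    apply Finset.sum_le_sum
    intro i _
    nlinarith [sq_nonneg (u i + u (i+2)), bI_nonneg (i+2)]
  have h2' : ∑ i ∈ range (n+1), (-(bI (i+2)/2) * u i ^2 - (bI (i+2)/2) * u (i+2)^2)
      = -(∑ i ∈ range (n+1), (bI (i+2)/2) * u i ^2)
        - ∑ i ∈ range (n+1), (bI (i+2)/2) * u (i+2)^2 := by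
    rw [Finset.sum_sub_distrib, ← Finset.sum_neg_distrib]
    apply congrArg₂ _ _ rfl
    apply Finset.sum_congr rfl
    intro i _
    ring
  -- step 3 : shift the u i^2 burden
  have h3 : ∑ i ∈ range (n+1), (bI (i+2)/2) * u i ^2
      ≤ (bI 2/2) * u 0^2 + ∑ i ∈ range (n+2), (bI (i+3)/2) * u (i+1)^2 := by
    have e1 : ∑ i ∈ range (n+1), (bI (i+2)/2) * u i ^2
        = (∑ i ∈ range n, (bI (i+3)/2) * u (i+1)^2) + (bI 2/2) * u 0^2 :=
      Finset.sum_range_succ' (fun i => (bI (i+2)/2) * u i^2) n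
    rw [e1]
    have e2 : ∑ i ∈ range n, (bI (i+3)/2) * u (i+1)^2
        ≤ ∑ i ∈ range (n+2), (bI (i+3)/2) * u (i+1)^2 := by
      apply Finset.sum_le_sum_of_subset_of_nonneg
      · exact Finset.range_subset_range.2 (by omega)
      · intro i _ _
        have := bI_nonneg (i+3)
        positivity
    linarith
  -- step 4 : shift the u (i+2)^2 burden
  have h4 : ∑ i ∈ range (n+1), (bI (i+2)/2) * u (i+2)^2
      = (∑ i ∈ range (n+2), (bI (i+1)/2) * u (i+1)^2) - (L/2) * u 1^2 := by
    have e1 : ∑ i ∈ range (n+2), (bI (i+1)/2) * u (i+1)^2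
        = (∑ i ∈ range (n+1), (bI (i+2)/2) * u (i+2)^2) + (bI 1/2) * u 1^2 :=
      Finset.sum_range_succ' (fun i => (bI (i+1)/2) * u (i+1)^2) (n+1)
    rw [e1, bI_one, ← hLdef]
    ring
  -- step 5 : coefficient bounds
  have c0 : rho (n+3) ≤ a0 (n+3) - S - S^2/(2*L) - bI 2/2 := by
    rw [a0_eq (by omega), ← hSdef, ← hLdef]
    have := bI_nonneg 2
    linarith
  have c0' : rho (n+3) * u 0^2 ≤ (a0 (n+3) - S - S^2/(2*L) - bI 2/2) * u 0^2 :=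
    mul_le_mul_of_nonneg_right c0 (sq_nonneg _)
  have h6 : ∑ i ∈ range (n+2), rho (n+3) * u (i+1)^2
      ≤ ∑ i ∈ range (n+2), (bI (i+2) - (bI (i+3)/2) - (bI (i+1)/2)) * u (i+1)^2 := by
    apply Finset.sum_le_sum
    intro i hi
    rw [Finset.mem_range] at hi
    apply mul_le_mul_of_nonneg_right _ (sq_nonneg _)
    have := key_log (m := i+2) (j := n+3) (by omega) (by omega)
    simp only [show i+2-1 = i+1 from rfl, show i+2+1 = i+3 from rfl] at this
    unfold rho
    linarith
  have h6' : ∑ i ∈ range (n+2), (bI (i+2) - (bI (i+3)/2) - (bI (i+1)/2)) * u (i+1)^2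
      = (∑ i ∈ range (n+2), bI (i+2) * u (i+1)^2)
        - (∑ i ∈ range (n+2), (bI (i+3)/2) * u (i+1)^2)
        - ∑ i ∈ range (n+2), (bI (i+1)/2) * u (i+1)^2 := by
    rw [← Finset.sum_sub_distrib, ← Finset.sum_sub_distrib]
    apply Finset.sum_congr rfl
    intro i _
    ring
  have h7 : ∑ i ∈ range (n+2), rho (n+3) * u (i+1)^2
      = rho (n+3) * ∑ i ∈ range (n+2), u (i+1)^2 := by
    rw [Finset.mul_sum]
  rw [h2'] at h2
  rw [h6', h7] at h6
  linarith [h2, h3, h4, h6, c0', h1]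

/-- bound on the cross part of the Lyapunov function -/
lemma W_bound (n : ℕ) (u : ℕ → ℝ) :
    |∑ i ∈ range (n+2), g (n+3) (i+1) * (u i * u (i+1))|
      ≤ sumB (n+3) * ∑ k ∈ range (n+3), u k ^ 2 := by
  set S := sumB (n+3) with hSdef
  have hS : (0:ℝ) < S := sumB_pos (by omega)
  have step1 : |∑ i ∈ range (n+2), g (n+3) (i+1) * (u i * u (i+1))|
      ≤ ∑ i ∈ range (n+2), (S/2) * (u i ^2 + u (i+1)^2) := by
    refine le_trans (Finset.abs_sum_le_sum_abs _ _) (Finset.sum_le_sum ?_)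
    intro i _
    rw [abs_mul, abs_of_nonneg (g_nonneg _ _), abs_mul]
    have h1 : |u i| * |u (i+1)| ≤ (u i ^2 + u (i+1)^2)/2 := by
      nlinarith [sq_nonneg (|u i| - |u (i+1)|), sq_abs (u i), sq_abs (u (i+1))]
    have h2 : g (n+3) (i+1) ≤ S := g_le_sumB _ _ (by omega)
    nlinarith [abs_nonneg (u i), abs_nonneg (u (i+1)), mul_nonneg (abs_nonneg (u i)) (abs_nonneg (u (i+1))), g_nonneg (n+3) (i+1)]
  have e1 : ∑ i ∈ range (n+2), (S/2) * (u i ^2 + u (i+1)^2)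
      = (S/2) * (∑ i ∈ range (n+2), u i ^2) + (S/2) * ∑ i ∈ range (n+2), u (i+1)^2 := by
    rw [← Finset.mul_sum, Finset.sum_add_distrib]
    ring
  have e2 : ∑ i ∈ range (n+2), u i ^2 ≤ ∑ k ∈ range (n+3), u k ^2 := by
    apply Finset.sum_le_sum_of_subset_of_nonneg (Finset.range_subset_range.2 (by omega))
    intro i _ _; positivity
  have e3 : ∑ i ∈ range (n+2), u (i+1) ^2 ≤ ∑ k ∈ range (n+3), u k ^2 := by
    have : ∑ k ∈ range (n+3), u k ^2 = (∑ i ∈ range (n+2), u (i+1)^2) + u 0 ^2 :=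
      Finset.sum_range_succ' (fun k => u k ^2) (n+2)
    nlinarith [sq_nonneg (u 0)]
  have hN : (0:ℝ) ≤ ∑ k ∈ range (n+3), u k ^2 := by positivity
  calc |∑ i ∈ range (n+2), g (n+3) (i+1) * (u i * u (i+1))|
      ≤ ∑ i ∈ range (n+2), (S/2) * (u i ^2 + u (i+1)^2) := step1
    _ = (S/2) * (∑ i ∈ range (n+2), u i ^2) + (S/2) * ∑ i ∈ range (n+2), u (i+1)^2 := e1
    _ ≤ (S/2) * (∑ k ∈ range (n+3), u k ^2) + (S/2) * ∑ k ∈ range (n+3), u k ^2 := by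
        have := (mul_le_mul_of_nonneg_left e2 (by linarith : (0:ℝ) ≤ S/2))
        have := (mul_le_mul_of_nonneg_left e3 (by linarith : (0:ℝ) ≤ S/2))
        linarith
    _ = S * ∑ k ∈ range (n+3), u k ^2 := by ring

/-- main differential inequality : D ≥ rJ · V -/
lemma core_main (n : ℕ) (u du : ℕ → ℝ) (hu : u (n+3) = 0)
    (hdu : ∀ k < n+3, du k = (if k = 0 then u 0 else u (k-1)) - u (k+1)) :
    rJ (n+3) * (a0 (n+3)/2 * (∑ k ∈ range (n+3), u k ^ 2)
        - ∑ i ∈ range (n+2), g (n+3) (i+1) * (u i * u (i+1)))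
      ≤ a0 (n+3) * (∑ k ∈ range (n+3), u k * du k)
        - ∑ i ∈ range (n+2), g (n+3) (i+1) * (du i * u (i+1) + u i * du (i+1)) := by
  rw [core1 n u du hu hdu, core2 n u du hu hdu]
  set S := sumB (n+3) with hSdef
  have hS : (0:ℝ) < S := sumB_pos (by omega)
  have ha0 : (0:ℝ) < a0 (n+3) := a0_pos (by omega)
  have hρ : (0:ℝ) < rho (n+3) := rho_pos (by omega)
  have hr : (0:ℝ) < rJ (n+3) := rJ_pos (by omega)
  set N := ∑ k ∈ range (n+3), u k ^ 2 with hNdef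
  have hN : (0:ℝ) ≤ N := by rw [hNdef]; positivity
  set W := ∑ i ∈ range (n+2), g (n+3) (i+1) * (u i * u (i+1)) with hWdef
  have hW : |W| ≤ S * N := W_bound n u
  have hsplit : N = (∑ i ∈ range (n+2), u (i+1) ^2) + u 0 ^2 := by
    rw [hNdef]; exact Finset.sum_range_succ' (fun k => u k ^2) (n+2)
  have hkey := core3 n u
  have hVle : a0 (n+3)/2 * N - W ≤ (a0 (n+3)/2 + S) * N := by
    have := (abs_le.1 hW).1
    nlinarith
  have hVr : rJ (n+3) * (a0 (n+3)/2 * N - W) ≤ rJ (n+3) * ((a0 (n+3)/2 + S) * N) :=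
    mul_le_mul_of_nonneg_left hVle (le_of_lt hr)
  have heq : rJ (n+3) * ((a0 (n+3)/2 + S) * N) = rho (n+3)/2 * N := by
    rw [rJ_eq, ← hSdef]
    have hne : a0 (n+3) + 2 * S ≠ 0 := by linarith
    field_simp
  have hfin : rho (n+3)/2 * N ≤ rho (n+3) * N := by nlinarith
  have hlast : rho (n+3) * N
      ≤ a0 (n+3) * u 0 ^ 2 - (S * u 0 ^ 2 + S * (u 0 * u 1)
          - ∑ i ∈ range (n+2), bI (i+2) * u (i+1) ^ 2
          - ∑ i ∈ range (n+1), bI (i+2) * (u i * u (i+2))) := by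
    rw [hsplit]
    nlinarith [hkey]
  linarith

/-- extension of a vector on `Fin j` to `ℕ` by zero -/
def ext (j : ℕ) (w : Fin j → ℝ) (k : ℕ) : ℝ := if h : k < j then w ⟨k, h⟩ else 0

lemma ext_eq (j : ℕ) (w : Fin j → ℝ) (k : ℕ) (h : k < j) : ext j w k = w ⟨k, h⟩ := dif_pos h

lemma ext_last (j : ℕ) (w : Fin j → ℝ) : ext j w j = 0 := dif_neg (by omega)

/-- delta function summation helper -/
lemma delta_sum (j : ℕ) (w : Fin j → ℝ) (P : Fin j → Prop) [DecidablePred P] (c : Fin j)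
    (hP : ∀ m, P m ↔ m = c) : (∑ m : Fin j, if P m then w m else 0) = w c := by
  have hpt : ∀ m : Fin j, (if P m then w m else 0) = (if m = c then w m else 0) := by
    intro m
    by_cases h : P m
    · rw [if_pos h, if_pos ((hP m).1 h)]
    · rw [if_neg h, if_neg (fun e => h ((hP m).2 e))]
  rw [Finset.sum_congr rfl (fun m _ => hpt m), Finset.sum_ite_eq' Finset.univ c w]
  simp

/-- the component formula for M = e11 + triJ -/
lemma mulVec_formula (j : ℕ) (w : Fin j → ℝ) (k : ℕ) (hk : k < j) :
    ((e11 j + triJ j) *ᵥ w) ⟨k, hk⟩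
      = (if k = 0 then ext j w 0 else ext j w (k-1)) - ext j w (k+1) := by
  have hsplit : ∀ m : Fin j, ((e11 j + triJ j) ⟨k, hk⟩ m) * w m
      = (if k = 0 ∧ (m : ℕ) = 0 then w m else 0)
        + ((if k = (m : ℕ) + 1 then w m else 0) - (if (m : ℕ) = k + 1 then w m else 0)) := by
    intro m
    simp only [Matrix.add_apply, e11, triJ, Matrix.of_apply]
    split_ifs <;> first | ring1 | (exfalso; omega)
  show ∑ m, ((e11 j + triJ j) ⟨k, hk⟩ m) * w m = _
  rw [Finset.sum_congr rfl (fun m _ => hsplit m), Finset.sum_add_distrib,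
    Finset.sum_sub_distrib]
  have h1 : ∑ m : Fin j, (if k = 0 ∧ (m : ℕ) = 0 then w m else 0)
      = if k = 0 then ext j w 0 else 0 := by
    by_cases hk0 : k = 0
    · rw [if_pos hk0, ext_eq j w 0 (by omega)]
      apply delta_sum j w _ (⟨0, by omega⟩ : Fin j)
      intro m
      simp [Fin.ext_iff, hk0]
    · rw [if_neg hk0]
      rw [Finset.sum_congr rfl (fun m _ => if_neg (by tauto))]
      simp
  have h2 : ∑ m : Fin j, (if k = (m : ℕ) + 1 then w m else 0)
      = if k = 0 then 0 else ext j w (k-1) := by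
    by_cases hk0 : k = 0
    · rw [if_pos hk0]
      rw [Finset.sum_congr rfl (fun m _ => if_neg (by omega))]
      simp
    · rw [if_neg hk0, ext_eq j w (k-1) (by omega)]
      apply delta_sum j w _ (⟨k-1, by omega⟩ : Fin j)
      intro m
      simp only [Fin.ext_iff]
      omega
  have h3 : ∑ m : Fin j, (if (m : ℕ) = k + 1 then w m else 0) = ext j w (k+1) := by
    by_cases hk1 : k + 1 < j
    · rw [ext_eq j w (k+1) hk1]
      apply delta_sum j w _ (⟨k+1, hk1⟩ : Fin j)
      intro m
      simp only [Fin.ext_iff]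
    · rw [show ext j w (k+1) = 0 from dif_neg hk1]
      rw [Finset.sum_congr rfl (fun m _ => if_neg (by omega))]
      simp
  rw [h1, h2, h3]
  by_cases hk0 : k = 0
  · simp only [hk0, if_pos]
    ring
  · simp only [hk0, if_neg, if_false]
    ring

/-- dot product as a range sum of the extension -/
lemma dot_eq_sum (j : ℕ) (w : Fin j → ℝ) :
    w ⬝ᵥ w = ∑ k ∈ range j, (ext j w k) ^ 2 := by
  rw [dotProduct]
  rw [← Fin.sum_univ_eq_sum_range (fun k => (ext j w k)^2) j]
  apply Finset.sum_congr rfl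
  intro i _
  rw [ext_eq j w i i.isLt]
  simp [pow_two]

/-- transpose identity -/
lemma transpose_eq (j : ℕ) (v : ℝ) :
    (-v) • (triJ j - e11 j)ᵀ = v • (e11 j + triJ j) := by
  ext i m
  simp only [Matrix.smul_apply, Matrix.transpose_apply, Matrix.sub_apply, Matrix.add_apply,
    triJ, e11, Matrix.of_apply, smul_eq_mul]
  split_ifs <;> first | ring1 | (exfalso; omega)

/-- Gronwall-type lower bound -/
lemma gronwall {V D : ℝ → ℝ} {r : ℝ} (hV : ∀ s, HasDerivAt V (D s) s)
    (h : ∀ s, r * V s ≤ D s) {t : ℝ} (ht : 0 ≤ t) :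
    Real.exp (r * t) * V 0 ≤ V t := by
  set G := fun s => Real.exp (-r * s) * V s with hGdef
  have hG : ∀ s, HasDerivAt G (Real.exp (-r * s) * (D s - r * V s)) s := by
    intro s
    have h1 : HasDerivAt (fun w : ℝ => -r * w) (-r) s := by
      simpa using (hasDerivAt_id s).const_mul (-r)
    have h2 := h1.exp
    have h3 := h2.mul (hV s)
    refine h3.congr_deriv ?_
    ring
  have hmono : Monotone G := by
    apply monotone_of_deriv_nonneg
    · intro s
      exact (hG s).differentiableAt
    · intro s
      rw [(hG s).deriv]
      exact mul_nonneg (Real.exp_pos _).le (by linarith [h s])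
  have hGt : G 0 ≤ G t := hmono ht
  have e0 : G 0 = V 0 := by simp [hGdef]
  calc Real.exp (r * t) * V 0 = Real.exp (r * t) * G 0 := by rw [e0]
    _ ≤ Real.exp (r * t) * G t := mul_le_mul_of_nonneg_left hGt (Real.exp_pos _).le
    _ = V t := by
        show Real.exp (r * t) * (Real.exp (-r * t) * V t) = V t
        rw [← mul_assoc, ← Real.exp_add]
        norm_num

-- component derivative of t ↦ exp(t•M) *ᵥ x
theorem comp_deriv {j : ℕ} (M : Matrix (Fin j) (Fin j) ℝ) (x : Fin j → ℝ) (i : Fin j) (t : ℝ) :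
    HasDerivAt (fun s : ℝ => (exp (s • M) *ᵥ x) i) ((M *ᵥ (exp (t • M) *ᵥ x)) i) t := by
  letI : SeminormedRing (Matrix (Fin j) (Fin j) ℝ) := Matrix.linftyOpSemiNormedRing
  letI : NormedRing (Matrix (Fin j) (Fin j) ℝ) := Matrix.linftyOpNormedRing
  letI : NormedAlgebra ℝ (Matrix (Fin j) (Fin j) ℝ) := Matrix.linftyOpNormedAlgebra
  have hD : HasDerivAt (fun s : ℝ => exp (s • M)) (M * exp (t • M)) t :=
    hasDerivAt_exp_smul_const' M t
  let L : Matrix (Fin j) (Fin j) ℝ →ₗ[ℝ] ℝ :=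
    { toFun := fun A => (A *ᵥ x) i
      map_add' := by intro A B; simp [Matrix.add_mulVec]
      map_smul' := by intro c A; simp [Matrix.smul_mulVec] }
  have hL : Continuous L := L.continuous_of_finiteDimensional
  have := (ContinuousLinearMap.hasFDerivAt ⟨L, hL⟩).comp_hasDerivAt t hD
  rw [Matrix.mulVec_mulVec]
  exact this

end S19

open S19 in
/-- oscillators with damping, instability of the time-reversed flow: with
M = E₁₁ + Tri_j(1,0,−1), for every x ∈ ℝʲ and t ≥ 0 one has ‖e^{tM}x‖² ≥ c_j e^{r_j t}‖x‖²,
and consequently, with A̲ = Tri_j(1,0,−1) − E₁₁,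
∫₀ᵗ ‖e^{−v A̲ᵀ}x‖² dv ≥ ‖x‖² (c_j/r_j)(e^{r_j t} − 1). -/
theorem stmt_19 (j : ℕ) (hj : 3 ≤ j) (x : Fin j → ℝ) (t : ℝ) (ht : 0 ≤ t) :
    (NormedSpace.exp (t • (e11 j + triJ j)) *ᵥ x) ⬝ᵥ
        (NormedSpace.exp (t • (e11 j + triJ j)) *ᵥ x)
      ≥ cJ j * Real.exp (rJ j * t) * (x ⬝ᵥ x) ∧
    ∫ v in (0:ℝ)..t,
        (NormedSpace.exp ((-v) • (triJ j - e11 j)ᵀ) *ᵥ x) ⬝ᵥ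
          (NormedSpace.exp ((-v) • (triJ j - e11 j)ᵀ) *ᵥ x)
      ≥ (x ⬝ᵥ x) * (cJ j / rJ j) * (Real.exp (rJ j * t) - 1) := by
  obtain ⟨n, rfl⟩ := Nat.exists_eq_add_of_le' hj
  set M := e11 (n+3) + triJ (n+3) with hM
  set U : ℝ → ℕ → ℝ := fun s k => ext (n+3) (exp (s • M) *ᵥ x) k with hU
  set DU : ℝ → ℕ → ℝ := fun s k => ext (n+3) (M *ᵥ (exp (s • M) *ᵥ x)) k with hDU
  -- derivatives of the components
  have hyd : ∀ (k : ℕ), k < n+3 → ∀ (s : ℝ), HasDerivAt (fun v => U v k) (DU s k) s := by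
    intro k hk s
    have e1 : (fun v => U v k) = (fun v => (exp (v • M) *ᵥ x) ⟨k, hk⟩) :=
      funext fun v => ext_eq _ _ _ hk
    have e2 : DU s k = (M *ᵥ (exp (s • M) *ᵥ x)) ⟨k, hk⟩ := ext_eq _ _ _ hk
    rw [e1, e2]
    exact comp_deriv M x ⟨k, hk⟩ s
  have hU_top : ∀ s, U s (n+3) = 0 := fun s => ext_last _ _
  have hdu_formula : ∀ s, ∀ k < n+3,
      DU s k = (if k = 0 then U s 0 else U s (k-1)) - U s (k+1) := by
    intro s k hk
    have := mulVec_formula (n+3) (exp (s • M) *ᵥ x) k hk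
    rw [← hM] at this
    calc DU s k = (M *ᵥ (exp (s • M) *ᵥ x)) ⟨k, hk⟩ := ext_eq _ _ _ hk
      _ = _ := this
  -- the Lyapunov function
  set V : ℝ → ℝ := fun s => a0 (n+3)/2 * (∑ k ∈ range (n+3), U s k ^ 2)
      - ∑ i ∈ range (n+2), g (n+3) (i+1) * (U s i * U s (i+1)) with hV
  have hVd : ∀ s, HasDerivAt V
      (a0 (n+3) * (∑ k ∈ range (n+3), U s k * DU s k)
        - ∑ i ∈ range (n+2), g (n+3) (i+1) * (DU s i * U s (i+1) + U s i * DU s (i+1))) s := by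
    intro s
    have hsum1 : HasDerivAt (fun v => ∑ k ∈ range (n+3), U v k ^ 2)
        (∑ k ∈ range (n+3), 2 * U s k * DU s k) s := by
      apply HasDerivAt.fun_sum
      intro k hk
      rw [Finset.mem_range] at hk
      simpa using (hyd k hk s).fun_pow 2
    have hsum2 : HasDerivAt (fun v => ∑ i ∈ range (n+2), g (n+3) (i+1) * (U v i * U v (i+1)))
        (∑ i ∈ range (n+2), g (n+3) (i+1) * (DU s i * U s (i+1) + U s i * DU s (i+1))) s := by
      apply HasDerivAt.fun_sum
      intro i hi
      rw [Finset.mem_range] at hi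
      exact ((hyd i (by omega) s).mul (hyd (i+1) (by omega) s)).const_mul _
    have hcomb := (hsum1.const_mul (a0 (n+3)/2)).sub hsum2
    refine hcomb.congr_deriv ?_
    rw [show ∑ k ∈ range (n+3), 2 * U s k * DU s k
        = 2 * ∑ k ∈ range (n+3), U s k * DU s k from by
      rw [Finset.mul_sum]; exact Finset.sum_congr rfl fun k _ => by ring]
    ring
  have hkey : ∀ s, rJ (n+3) * V s ≤
      a0 (n+3) * (∑ k ∈ range (n+3), U s k * DU s k)
        - ∑ i ∈ range (n+2), g (n+3) (i+1) * (DU s i * U s (i+1) + U s i * DU s (i+1)) :=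
    fun s => core_main n (U s) (DU s) (hU_top s) (hdu_formula s)
  -- positivity facts
  have hP : (0:ℝ) < a0 (n+3)/2 + sumB (n+3) := by
    have := a0_pos (j := n+3) (by omega)
    have := sumB_pos (j := n+3) (by omega)
    linarith
  have hQ : (0:ℝ) < a0 (n+3)/2 - sumB (n+3) := a0_half_sub_sumB_pos (by omega)
  have hrpos : (0:ℝ) < rJ (n+3) := rJ_pos (by omega)
  -- part 1 (for all v ≥ 0)
  have hdot : ∀ s, (exp (s • M) *ᵥ x) ⬝ᵥ (exp (s • M) *ᵥ x)
      = ∑ k ∈ range (n+3), U s k ^ 2 := fun s => dot_eq_sum (n+3) _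
  have hx0 : exp ((0:ℝ) • M) *ᵥ x = x := by
    rw [zero_smul, exp_zero, Matrix.one_mulVec]
  have part1 : ∀ v : ℝ, 0 ≤ v →
      cJ (n+3) * Real.exp (rJ (n+3) * v) * (x ⬝ᵥ x)
        ≤ (exp (v • M) *ᵥ x) ⬝ᵥ (exp (v • M) *ᵥ x) := by
    intro v hv
    have hg := gronwall hVd hkey hv
    have hWv := W_bound n (U v)
    have hW0 := W_bound n (U 0)
    have hNv : (exp (v • M) *ᵥ x) ⬝ᵥ (exp (v • M) *ᵥ x)
        = ∑ k ∈ range (n+3), U v k ^ 2 := hdot v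
    have hN0 : x ⬝ᵥ x = ∑ k ∈ range (n+3), U 0 k ^ 2 := by
      rw [← hdot 0, hx0]
    have h1 : V v ≤ (a0 (n+3)/2 + sumB (n+3)) * ∑ k ∈ range (n+3), U v k ^ 2 := by
      rw [hV]
      have := (abs_le.1 hWv).1
      nlinarith
    have h2 : (a0 (n+3)/2 - sumB (n+3)) * ∑ k ∈ range (n+3), U 0 k ^ 2 ≤ V 0 := by
      rw [hV]
      have := (abs_le.1 hW0).2
      nlinarith
    rw [← mul_le_mul_iff_of_pos_right hP]
    have hcP : cJ (n+3) * Real.exp (rJ (n+3) * v) * (x ⬝ᵥ x) * (a0 (n+3)/2 + sumB (n+3))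
        = Real.exp (rJ (n+3) * v) * ((a0 (n+3)/2 - sumB (n+3)) * (x ⬝ᵥ x)) := by
      have hcc : cJ (n+3) * (a0 (n+3)/2 + sumB (n+3)) = a0 (n+3)/2 - sumB (n+3) :=
        div_mul_cancel₀ _ (ne_of_gt hP)
      calc cJ (n+3) * Real.exp (rJ (n+3) * v) * (x ⬝ᵥ x) * (a0 (n+3)/2 + sumB (n+3))
          = (cJ (n+3) * (a0 (n+3)/2 + sumB (n+3))) * (Real.exp (rJ (n+3) * v) * (x ⬝ᵥ x)) := by
            ring
        _ = _ := by rw [hcc]; ring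
    rw [hcP, hNv]
    have hstep : Real.exp (rJ (n+3) * v) * ((a0 (n+3)/2 - sumB (n+3)) * (x ⬝ᵥ x))
        ≤ Real.exp (rJ (n+3) * v) * V 0 := by
      apply mul_le_mul_of_nonneg_left _ (Real.exp_pos _).le
      rw [hN0]
      exact h2
    calc Real.exp (rJ (n+3) * v) * ((a0 (n+3)/2 - sumB (n+3)) * (x ⬝ᵥ x))
        ≤ Real.exp (rJ (n+3) * v) * V 0 := hstep
      _ ≤ V v := hg
      _ ≤ (a0 (n+3)/2 + sumB (n+3)) * ∑ k ∈ range (n+3), U v k ^ 2 := h1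
      _ = (∑ k ∈ range (n+3), U v k ^ 2) * (a0 (n+3)/2 + sumB (n+3)) := by ring
  constructor
  · exact part1 t ht
  · -- part 2
    have hre : ∀ v : ℝ, (-v) • (triJ (n+3) - e11 (n+3))ᵀ = v • M := fun v => transpose_eq (n+3) v
    simp only [hre]
    -- continuity of the integrand
    have hcontU : ∀ k, k < n+3 → Continuous (fun v => U v k) := by
      intro k hk
      exact continuous_iff_continuousAt.2 fun s => (hyd k hk s).continuousAt
    have hcont : Continuous (fun v : ℝ => (exp (v • M) *ᵥ x) ⬝ᵥ (exp (v • M) *ᵥ x)) := by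
      have e : (fun v : ℝ => (exp (v • M) *ᵥ x) ⬝ᵥ (exp (v • M) *ᵥ x))
          = fun v => ∑ k ∈ range (n+3), U v k ^ 2 := funext fun v => hdot v
      rw [e]
      apply continuous_finset_sum
      intro k hk
      rw [Finset.mem_range] at hk
      exact (hcontU k hk).pow 2
    have hcontφ : Continuous (fun v : ℝ => cJ (n+3) * Real.exp (rJ (n+3) * v) * (x ⬝ᵥ x)) := by
      apply Continuous.mul _ continuous_const
      exact continuous_const.mul (Real.continuous_exp.comp (continuous_const.mul continuous_id))
    have hint2 : IntervalIntegrable (fun v : ℝ => cJ (n+3) * Real.exp (rJ (n+3) * v) * (x ⬝ᵥ x))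
        MeasureTheory.volume 0 t := hcontφ.intervalIntegrable 0 t
    have hint1 : IntervalIntegrable (fun v : ℝ => (exp (v • M) *ᵥ x) ⬝ᵥ (exp (v • M) *ᵥ x))
        MeasureTheory.volume 0 t := hcont.intervalIntegrable 0 t
    have hmono := intervalIntegral.integral_mono_on ht hint2 hint1 (fun v hv => part1 v hv.1)
    have hφval : ∫ v in (0:ℝ)..t, cJ (n+3) * Real.exp (rJ (n+3) * v) * (x ⬝ᵥ x)
        = (x ⬝ᵥ x) * (cJ (n+3) / rJ (n+3)) * (Real.exp (rJ (n+3) * t) - 1) := by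
      have hF : ∀ v ∈ Set.uIcc (0:ℝ) t,
          HasDerivAt (fun w => cJ (n+3) * Real.exp (rJ (n+3) * w) * (x ⬝ᵥ x) / rJ (n+3))
            (cJ (n+3) * Real.exp (rJ (n+3) * v) * (x ⬝ᵥ x)) v := by
        intro v _
        have h1 : HasDerivAt (fun w : ℝ => rJ (n+3) * w) (rJ (n+3)) v := by
          simpa using (hasDerivAt_id v).const_mul (rJ (n+3))
        have h2 := ((h1.exp.const_mul (cJ (n+3))).mul_const (x ⬝ᵥ x)).div_const (rJ (n+3))
        refine h2.congr_deriv ?_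
        field_simp
      rw [intervalIntegral.integral_eq_sub_of_hasDerivAt hF
        (hcontφ.intervalIntegrable 0 t : IntervalIntegrable _ MeasureTheory.volume 0 t)]
      rw [mul_zero, Real.exp_zero]
      field_simp
    rw [ge_iff_le, ← hφval]
    exact hmono
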